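/- Let G be an Eulerian graph on an odd number n of vertices whose characteristic polynomial factors over F_2 as φ = x φ_1^2 with gcd(x, φ_1) = 1 (i.e., the multiplicity of eigenvalue 0 mod 2 is k = 1). Then φ_1(A) ≡ J_n (mod 2), the all-ones matrix, over F_2. -/

import Mathlib

open Matrix Polynomial

namespace PhiOneAux

variable {K : Type*} [Field K] {V : Type*} [AddCommGroup V] [Module K V] [FiniteDimensional K V]

lemma aeval_restrict_coe (f : V →ₗ[K] V) {p : Submodule K V} (hp : ∀ x ∈ p, f x ∈ p)
    (ψ : K[X]) (x : p) :
    ((aeval (f.restrict hp) ψ) x : V) = (aeval f ψ) (x : V) := by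
  induction ψ using Polynomial.induction_on' with
  | add a b ha hb => simp [ha, hb]
  | monomial k a =>
      rw [aeval_monomial, aeval_monomial, Module.End.pow_restrict]
      simp [Module.End.mul_apply, LinearMap.restrict_apply, Module.algebraMap_end_apply]

lemma charpoly_zero_end : (0 : Module.End K V).charpoly = X ^ (Module.finrank K V) := by
  classical
  let b := Module.finBasis K V
  rw [← LinearMap.charpoly_toMatrix (0 : Module.End K V) b, map_zero]
  unfold Matrix.charpoly
  have h : charmatrix (0 : Matrix (Fin (Module.finrank K V)) (Fin (Module.finrank K V)) K)
      = diagonal (fun _ => (X : K[X])) := by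
    ext i j
    by_cases h : i = j
    · subst h; simp [charmatrix_apply_eq]
    · simp [charmatrix_apply_ne _ _ _ h, diagonal_apply_ne _ h]
  rw [h, det_diagonal]
  simp

lemma charpoly_eq_mul (f : Module.End K V) (p q : Submodule K V) (hpq : IsCompl p q)
    (hp : ∀ x ∈ p, f x ∈ p) :
    f.charpoly = (f.restrict hp).charpoly *
      ((q.projectionOnto p hpq.symm) ∘ₗ f ∘ₗ q.subtype).charpoly := by
  classical
  set πp := p.projectionOnto q hpq with hπp
  set πq := q.projectionOnto p hpq.symm with hπq
  set r := f.restrict hp with hr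
  set s : q →ₗ[K] p := πp ∘ₗ f ∘ₗ q.subtype with hs
  set t : Module.End K q := πq ∘ₗ f ∘ₗ q.subtype with ht
  set e := Submodule.prodEquivOfIsCompl p q hpq with he
  have hsymm : ∀ z : V, e.symm z = (πp z, πq z) := by
    intro z
    apply e.injective
    rw [LinearEquiv.apply_symm_apply]
    have : e (πp z, πq z) = (πp z : V) + (πq z : V) := by
      rw [he]; exact Submodule.coe_prodEquivOfIsCompl' p q hpq _
    rw [this]
    exact (Submodule.projection_add_projection_eq_self hpq z).symm
  set G : Module.End K (p × q) :=
    LinearMap.prod (r ∘ₗ LinearMap.fst K p q + s ∘ₗ LinearMap.snd K p q)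
      (t ∘ₗ LinearMap.snd K p q) with hG
  have hconj : (e.symm.conj f) = G := by
    apply LinearMap.ext; rintro ⟨x, y⟩
    rw [LinearEquiv.conj_apply]
    simp only [LinearMap.comp_apply, LinearEquiv.coe_coe, LinearEquiv.symm_symm]
    have hxy : e (x, y) = (x : V) + (y : V) := by
      rw [he]; exact Submodule.coe_prodEquivOfIsCompl' p q hpq _
    rw [hxy, hsymm]
    have h1 : πp (f ((x : V) + (y : V))) = r x + s y := by
      rw [map_add, map_add]
      have e1 : πp (f (x : V)) = r x := by
        have h : f (x : V) = ((⟨f x, hp x x.2⟩ : p) : V) := rfl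
        rw [h, Submodule.projectionOnto_apply_left hpq]
        exact (LinearMap.restrict_apply hp x).symm
      have e2 : πp (f (y : V)) = s y := rfl
      rw [e1, e2]
    have h2 : πq (f ((x : V) + (y : V))) = t y := by
      rw [map_add, map_add]
      have : πq (f (x : V)) = 0 := by
        have : f (x : V) = ((⟨f x, hp x x.2⟩ : p) : V) := rfl
        rw [this]
        exact Submodule.projectionOnto_apply_right hpq.symm _
      rw [this, zero_add]
      rfl
    rw [h1, h2]
    rfl
  let b₁ := Module.finBasis K p
  let b₂ := Module.finBasis K q
  let b := b₁.prod b₂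
  have hM : LinearMap.toMatrix b b G =
      fromBlocks (LinearMap.toMatrix b₁ b₁ r) (LinearMap.toMatrix b₂ b₁ s)
        0 (LinearMap.toMatrix b₂ b₂ t) := by
    ext (i | i) (j | j) <;>
      simp [LinearMap.toMatrix_apply, b, G, Module.Basis.prod_apply, Module.Basis.prod_repr_inl,
        Module.Basis.prod_repr_inr, fromBlocks]
  calc f.charpoly = (e.symm.conj f).charpoly := (LinearEquiv.charpoly_conj _ _).symm
    _ = G.charpoly := by rw [hconj]
    _ = (LinearMap.toMatrix b b G).charpoly := (LinearMap.charpoly_toMatrix _ _).symm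
    _ = (LinearMap.toMatrix b₁ b₁ r).charpoly * (LinearMap.toMatrix b₂ b₂ t).charpoly := by
        rw [hM, Matrix.charpoly_fromBlocks_zero₂₁]
    _ = r.charpoly * t.charpoly := by
        rw [LinearMap.charpoly_toMatrix, LinearMap.charpoly_toMatrix]

lemma aeval_proj (f : Module.End K V) (p q : Submodule K V) (hpq : IsCompl p q)
    (hp : ∀ x ∈ p, f x ∈ p) (ψ : K[X]) (v : V) :
    q.projectionOnto p hpq.symm ((aeval f ψ) v) =
      (aeval ((q.projectionOnto p hpq.symm) ∘ₗ f ∘ₗ q.subtype) ψ)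
        (q.projectionOnto p hpq.symm v) := by
  set πq := q.projectionOnto p hpq.symm with hπq
  set t : Module.End K q := πq ∘ₗ f ∘ₗ q.subtype with ht
  have hstep : ∀ z : V, πq (f z) = t (πq z) := by
    intro z
    conv_lhs => rw [← Submodule.projection_add_projection_eq_self hpq z, Submodule.projection_apply, Submodule.projection_apply]
    rw [map_add, map_add]
    have h0 : πq (f ((p.projectionOnto q hpq z : p) : V)) = 0 := by
      have hmem : f ((p.projectionOnto q hpq z : p) : V) ∈ p := hp _ (Submodule.coe_mem _)
      have : f ((p.projectionOnto q hpq z : p) : V) = ((⟨_, hmem⟩ : p) : V) := rfl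
      rw [this]
      exact Submodule.projectionOnto_apply_right hpq.symm _
    rw [h0, zero_add]
    rfl
  have hpow : ∀ (k : ℕ) (z : V), πq ((f ^ k) z) = (t ^ k) (πq z) := by
    intro k
    induction k with
    | zero => intro z; simp
    | succ k ih =>
        intro z
        rw [pow_succ, pow_succ, Module.End.mul_apply, Module.End.mul_apply]
        rw [ih (f z), hstep z]
  induction ψ using Polynomial.induction_on' with
  | add a b ha hb => simp [ha, hb]
  | monomial k a =>
      rw [aeval_monomial, aeval_monomial]
      simp only [Module.End.mul_apply, Module.algebraMap_end_apply, _root_.map_smul]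
      rw [hpow]

end PhiOneAux

open PhiOneAux

set_option maxHeartbeats 2000000 in
/-- Let `G` be an Eulerian graph on an odd number `n` of vertices whose characteristic
polynomial factors over `F₂` as `φ = x · φ₁²` with `gcd(x, φ₁) = 1` (i.e. `φ₁(0) ≠ 0`). Then
`φ₁(A) = Jₙ`, the all-ones matrix, over `F₂`. -/
theorem phi_one_eval_eq_allOnes {n : ℕ} (hn : Odd n)
    (G : SimpleGraph (Fin n)) [DecidableRel G.Adj]
    (hconn : G.Connected) (hdeg : ∀ v, Even (G.degree v))
    (φ₁ : Polynomial (ZMod 2))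
    (hfac : (G.adjMatrix (ZMod 2)).charpoly = X * φ₁ ^ 2)
    (hcoprime : φ₁.coeff 0 ≠ 0) :
    Polynomial.aeval (G.adjMatrix (ZMod 2)) φ₁ = Matrix.of (fun _ _ => (1 : ZMod 2)) := by
  classical
  have hnpos : 0 < n := hn.pos
  set A := G.adjMatrix (ZMod 2) with hAdef
  set vone : Fin n → ZMod 2 := fun _ => 1 with hvone
  have hAsym : Aᵀ = A := G.transpose_adjMatrix
  -- A *ᵥ 1 = 0
  have hA1 : A *ᵥ vone = 0 := by
    funext i
    have h := SimpleGraph.adjMatrix_mulVec_const_apply (G := G) (α := ZMod 2) (a := (1 : ZMod 2))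
      (v := i)
    have h2 : (A *ᵥ vone) i = (G.degree i : ZMod 2) * 1 := h
    rw [h2]
    obtain ⟨k, hk⟩ := hdeg i
    rw [hk]
    push_cast
    ring_nf
    have : ((2 : ZMod 2)) = 0 := by decide
    rw [mul_comm, two_mul] at *
    simp [CharTwo.add_self_eq_zero]
  -- alternating property of A
  have halt : ∀ x : Fin n → ZMod 2, x ⬝ᵥ (A *ᵥ x) = 0 := by
    intro x
    set N : Matrix (Fin n) (Fin n) (ZMod 2) :=
      Matrix.of (fun i j => if i < j then A i j else 0) with hN
    have hNA : N + Nᵀ = A := by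
      ext i j
      rcases lt_trichotomy i j with h | h | h
      · simp [hN, transpose_apply, h, not_lt_of_gt h]
      · subst h
        simp [hN, hAdef, SimpleGraph.adjMatrix_apply]
      · have : A j i = A i j := by
          conv_rhs => rw [← hAsym]
          rw [transpose_apply]
        simp [hN, transpose_apply, h, not_lt_of_gt h, this]
    rw [← hNA, add_mulVec, dotProduct_add]
    have h1 : x ⬝ᵥ (Nᵀ *ᵥ x) = x ⬝ᵥ (N *ᵥ x) := by
      rw [mulVec_transpose, dotProduct_comm, dotProduct_mulVec]
    rw [h1, CharTwo.add_self_eq_zero]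
  -- self-adjointness
  have hself : ∀ (M : Matrix (Fin n) (Fin n) (ZMod 2)), Mᵀ = M →
      ∀ u v' : Fin n → ZMod 2, (M *ᵥ u) ⬝ᵥ v' = u ⬝ᵥ (M *ᵥ v') := by
    intro M hM u v'
    conv_lhs => rw [← hM]
    rw [mulVec_transpose, ← dotProduct_mulVec]
  have hpows : ∀ k : ℕ, (A ^ k)ᵀ = A ^ k := by
    intro k; rw [transpose_pow, hAsym]
  have hpow1 : ∀ k : ℕ, A ^ (k + 1) *ᵥ vone = 0 := by
    intro k
    rw [pow_succ, ← mulVec_mulVec, hA1, mulVec_zero]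
  have hmulself : ∀ y : Fin n → ZMod 2, y ⬝ᵥ y = y ⬝ᵥ vone := by
    intro y
    unfold dotProduct
    refine Finset.sum_congr rfl fun i _ => ?_
    have : ∀ a : ZMod 2, a * a = a * 1 := by decide
    exact this (y i)
  have hquad : ∀ (k : ℕ) (x : Fin n → ZMod 2), x ⬝ᵥ (A ^ (k + 1) *ᵥ x) = 0 := by
    intro k x
    rcases Nat.even_or_odd (k + 1) with ⟨r, hr⟩ | ⟨r, hr⟩
    · -- k+1 = r + r, r ≥ 1
      have hrpos : 0 < r := by omega
      obtain ⟨m, hm⟩ : ∃ m, r = m + 1 := ⟨r - 1, by omega⟩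
      have hsplit : A ^ (k+1) = A ^ r * A ^ r := by rw [hr, pow_add]
      rw [hsplit, ← mulVec_mulVec]
      rw [← hself (A ^ r) (hpows r) x (A ^ r *ᵥ x)]
      rw [hmulself]
      rw [hself (A ^ r) (hpows r) x vone]
      rw [hm, hpow1 m, dotProduct_zero]
    · -- k+1 = 2r+1
      have hsplit : A ^ (k+1) = A ^ r * (A * A ^ r) := by
        rw [hr]
        rw [show 2 * r + 1 = r + (1 + r) by ring, pow_add, pow_add, pow_one]
      rw [hsplit, ← mulVec_mulVec, ← hself (A ^ r) (hpows r) x _, ← mulVec_mulVec]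
      exact halt _
  -- the endomorphism
  set f := Matrix.toLinAlgEquiv' A with hfdef
  have hfapp : ∀ x : Fin n → ZMod 2, f x = A *ᵥ x := fun x => rfl
  have haev : ∀ (ψ : (ZMod 2)[X]) (x : Fin n → ZMod 2),
      (aeval (f : Module.End (ZMod 2) (Fin n → ZMod 2)) ψ) x = (aeval A ψ) *ᵥ x := by
    intro ψ x
    rw [hfdef, Polynomial.aeval_algHom_apply (Matrix.toLinAlgEquiv' (R := ZMod 2)) A ψ]
    rfl
  have hcharf : LinearMap.charpoly (f : Module.End (ZMod 2) (Fin n → ZMod 2)) = A.charpoly := by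
    rw [← LinearMap.charpoly_toMatrix (f : Module.End (ZMod 2) (Fin n → ZMod 2))
      (Pi.basisFun (ZMod 2) (Fin n)), LinearMap.toMatrix_eq_toMatrix']
    congr 1
    have : (f : Module.End (ZMod 2) (Fin n → ZMod 2)) = Matrix.toLin' A := rfl
    rw [this]
    exact LinearMap.toMatrix'_toLin' A
  -- transpose of polynomials in A
  have htaev : ∀ ψ : (ZMod 2)[X], (aeval A ψ)ᵀ = aeval A ψ := by
    intro ψ
    induction ψ using Polynomial.induction_on' with
    | add a b ha hb => rw [map_add, transpose_add, ha, hb]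
    | monomial k a =>
        rw [aeval_monomial, transpose_mul, hpows]
        have h1 : ((algebraMap (ZMod 2) (Matrix (Fin n) (Fin n) (ZMod 2))) a)ᵀ =
            (algebraMap (ZMod 2) (Matrix (Fin n) (Fin n) (ZMod 2))) a := by
          rw [Matrix.algebraMap_eq_diagonal]
          exact (Matrix.diagonal_transpose _)
        rw [h1, ← Algebra.commutes]
  -- linear functional for dot product
  set dotL : (Fin n → ZMod 2) → ((Fin n → ZMod 2) →ₗ[ZMod 2] ZMod 2) := fun u =>
    { toFun := fun y => u ⬝ᵥ y
      map_add' := fun a b => dotProduct_add u a b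
      map_smul' := fun c a => by simp [dotProduct_smul] } with hdotL
  -- THE CRUX: φ₁(A) * A = 0
  have hBA : ∀ v : Fin n → ZMod 2, (aeval A φ₁) *ᵥ (A *ᵥ v) = 0 := by
    intro v
    set w := A *ᵥ v with hw
    set U : Submodule (ZMod 2) (Fin n → ZMod 2) :=
      Submodule.span (ZMod 2) (Set.range fun k : ℕ => (A ^ k) *ᵥ w) with hU
    have hwU : w ∈ U := by
      apply Submodule.subset_span
      exact ⟨0, by show A ^ 0 *ᵥ w = w; rw [pow_zero, one_mulVec]⟩
    have hUinvmul : ∀ x ∈ U, A *ᵥ x ∈ U := by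
      intro x hx
      induction hx using Submodule.span_induction with
      | mem y hy =>
          obtain ⟨k, rfl⟩ := hy
          apply Submodule.subset_span
          exact ⟨k + 1, by show A ^ (k+1) *ᵥ w = A *ᵥ (A ^ k *ᵥ w); rw [pow_succ', ← mulVec_mulVec]⟩
      | zero => rw [mulVec_zero]; exact U.zero_mem
      | add a b _ _ ha hb => rw [mulVec_add]; exact U.add_mem ha hb
      | smul c a _ ha => rw [mulVec_smul]; exact U.smul_mem c ha
    have hUinv : ∀ x ∈ U, f x ∈ U := fun x hx => hUinvmul x hx
    -- pairwise isotropy of generators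
    have hgen : ∀ k l : ℕ, ((A ^ k) *ᵥ w) ⬝ᵥ ((A ^ l) *ᵥ w) = 0 := by
      intro k l
      rw [hself (A ^ k) (hpows k) w ((A ^ l) *ᵥ w), hw]
      rw [mulVec_mulVec, mulVec_mulVec]
      rw [hself A hAsym v ((A ^ k * A ^ l * A) *ᵥ v), mulVec_mulVec]
      have harith : A * (A ^ k * A ^ l * A) = A ^ (k + l + 1 + 1) := by
        rw [← pow_add, ← pow_succ, ← pow_succ']
      rw [harith]
      exact hquad (k + l + 1) v
    -- total isotropy of U
    have hUiso : ∀ x ∈ U, ∀ y ∈ U, x ⬝ᵥ y = 0 := by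
      have h1 : ∀ y ∈ U, ∀ k : ℕ, ((A ^ k) *ᵥ w) ⬝ᵥ y = 0 := by
        intro y hy
        induction hy using Submodule.span_induction with
        | mem z hz => intro k; obtain ⟨l, rfl⟩ := hz; exact hgen k l
        | zero => intro k; rw [dotProduct_zero]
        | add a b _ _ ha hb => intro k; rw [dotProduct_add, ha, hb, add_zero]
        | smul c a _ ha => intro k; rw [dotProduct_smul, ha, smul_zero]
      intro x hx y hy
      induction hx using Submodule.span_induction with
      | mem z hz => obtain ⟨l, rfl⟩ := hz; exact h1 y hy l
      | zero => rw [zero_dotProduct]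
      | add a b _ _ ha hb => rw [add_dotProduct, ha, hb, add_zero]
      | smul c a _ ha => rw [smul_dotProduct, ha, smul_zero]
    -- the orthogonal complement of U
    set P : Submodule (ZMod 2) (Fin n → ZMod 2) :=
      (⨅ (u : {u // u ∈ U}), LinearMap.ker (dotL u.1)) with hP
    have hmemP : ∀ x : Fin n → ZMod 2, x ∈ P ↔ ∀ u ∈ U, u ⬝ᵥ x = 0 := by
      intro x
      rw [hP, Submodule.mem_iInf]
      constructor
      · intro h u hu; exact h ⟨u, hu⟩
      · intro h u; exact h u.1 u.2
    have hUP : U ≤ P := by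
      intro x hx
      rw [hmemP]
      intro u hu
      exact hUiso u hu x hx
    have hPinv : ∀ x ∈ P, f x ∈ P := by
      intro x hx
      rw [hmemP] at hx ⊢
      intro u hu
      rw [hfapp, ← hself A hAsym u x]
      exact hx _ (hUinvmul u hu)
    obtain ⟨Q, hQ⟩ := Submodule.exists_isCompl P
    -- minimal polynomial of the restriction of f to U
    set rU : Module.End (ZMod 2) U := LinearMap.restrict f hUinv with hrU
    set μ := minpoly (ZMod 2) rU with hμ
    have hμw : (aeval A μ) *ᵥ w = 0 := by
      have h0 : aeval rU μ = 0 := minpoly.aeval (ZMod 2) rU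
      have h1 : ((aeval rU μ) (⟨w, hwU⟩ : U) : Fin n → ZMod 2) = 0 := by rw [h0]; rfl
      rw [aeval_restrict_coe f hUinv μ ⟨w, hwU⟩] at h1
      rw [← haev]
      exact h1
    set rP : Module.End (ZMod 2) P := LinearMap.restrict f hPinv with hrP
    set tQ : Module.End (ZMod 2) Q :=
      (Q.projectionOnto P hQ.symm) ∘ₗ (f : Module.End (ZMod 2) (Fin n → ZMod 2)) ∘ₗ Q.subtype
      with htQ
    have hmul : LinearMap.charpoly (f : Module.End (ZMod 2) (Fin n → ZMod 2)) =
        rP.charpoly * tQ.charpoly := charpoly_eq_mul _ P Q hQ hPinv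
    -- μ divides charpoly of rP
    have hμP : μ ∣ rP.charpoly := by
      apply minpoly.dvd
      have hP0 : ∀ z ∈ P, (aeval A rP.charpoly) *ᵥ z = 0 := by
        intro z hz
        have h0 : aeval rP rP.charpoly = 0 := LinearMap.aeval_self_charpoly rP
        have h1 : ((aeval rP rP.charpoly) (⟨z, hz⟩ : P) : Fin n → ZMod 2) = 0 := by rw [h0]; rfl
        rw [aeval_restrict_coe f hPinv rP.charpoly ⟨z, hz⟩] at h1
        rw [← haev]
        exact h1
      apply LinearMap.ext
      intro x
      apply Subtype.ext
      rw [aeval_restrict_coe f hUinv rP.charpoly x]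
      rw [haev]
      exact hP0 x (hUP x.2)
    -- μ divides charpoly of tQ
    have hμQ : μ ∣ tQ.charpoly := by
      apply minpoly.dvd
      have hQall : ∀ v' : Fin n → ZMod 2, (aeval A tQ.charpoly) *ᵥ v' ∈ P := by
        intro v'
        have h0 : aeval tQ tQ.charpoly = 0 := LinearMap.aeval_self_charpoly tQ
        have h1 := aeval_proj (f : Module.End (ZMod 2) (Fin n → ZMod 2)) P Q hQ hPinv
          tQ.charpoly v'
        rw [h0] at h1
        have h2 : Q.projectionOnto P hQ.symm
            ((aeval (f : Module.End (ZMod 2) (Fin n → ZMod 2)) tQ.charpoly) v') = 0 := by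
          rw [h1]; rfl
        have h3 := Submodule.projection_add_projection_eq_self hQ
          ((aeval (f : Module.End (ZMod 2) (Fin n → ZMod 2)) tQ.charpoly) v')
        rw [Submodule.projection_apply, Submodule.projection_apply, h2] at h3
        simp only [Submodule.coe_zero, add_zero] at h3
        rw [← haev]
        rw [← h3]
        exact Submodule.coe_mem _
      apply LinearMap.ext
      intro x
      apply Subtype.ext
      rw [aeval_restrict_coe f hUinv tQ.charpoly x]
      rw [haev]
      -- show (aeval A tQ.charpoly) *ᵥ ↑x = 0 using nondegeneracy
      set M := aeval A tQ.charpoly with hM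
      have hMt : Mᵀ = M := htaev _
      funext i
      have h4 : Pi.single i (1 : ZMod 2) ⬝ᵥ (M *ᵥ (x : Fin n → ZMod 2)) = 0 := by
        rw [← hself M hMt (Pi.single i 1) (x : Fin n → ZMod 2)]
        rw [dotProduct_comm]
        have h5 : M *ᵥ Pi.single i 1 ∈ P := hQall _
        rw [hmemP] at h5
        exact h5 _ x.2
      rw [single_dotProduct, one_mul] at h4
      exact h4
    -- μ² divides X φ₁²
    have hμ2 : μ * μ ∣ X * φ₁ ^ 2 := by
      rw [← hfac, ← hcharf, hmul]
      exact mul_dvd_mul hμP hμQ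
    have hXφ : ¬ (X : (ZMod 2)[X]) ∣ φ₁ := fun h => hcoprime (X_dvd_iff.mp h)
    have hXμ : ¬ (X : (ZMod 2)[X]) ∣ μ := by
      intro hd
      obtain ⟨c, hc⟩ := hd
      have : (X : (ZMod 2)[X]) * X ∣ X * φ₁ ^ 2 := by
        refine dvd_trans ?_ hμ2
        rw [hc]
        exact ⟨c * c, by ring⟩
      obtain ⟨d, hd2⟩ := this
      rw [mul_assoc] at hd2
      have hcan : φ₁ ^ 2 = X * d := mul_left_cancel₀ Polynomial.X_ne_zero hd2
      have : (X : (ZMod 2)[X]) ∣ φ₁ ^ 2 := ⟨d, hcan⟩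
      rcases (Polynomial.prime_X (R := ZMod 2)).dvd_of_dvd_pow this with h
      exact hXφ h
    have hμ2φ : μ * μ ∣ φ₁ ^ 2 := by
      have hcop : IsCoprime (μ * μ) (X : (ZMod 2)[X]) := by
        apply IsCoprime.symm
        rw [(Polynomial.prime_X (R := ZMod 2)).coprime_iff_not_dvd]
        intro hd
        rcases (Polynomial.prime_X (R := ZMod 2)).dvd_mul.mp hd with h | h <;> exact hXμ h
      exact hcop.dvd_of_dvd_mul_left hμ2
    have hμφ : μ ∣ φ₁ := by
      have h2 : μ ^ 2 ∣ φ₁ ^ 2 := by rw [pow_two]; exact hμ2φ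
      exact (IsIntegrallyClosed.pow_dvd_pow_iff (two_ne_zero)).mp h2
    obtain ⟨c, hc⟩ := hμφ
    rw [hc, mul_comm, _root_.map_mul, ← mulVec_mulVec, hμw, mulVec_zero]
  -- kernel of A is {0, vone}
  have hXφ : ¬ (X : (ZMod 2)[X]) ∣ φ₁ := fun h => hcoprime (X_dvd_iff.mp h)
  have hker : ∀ x : Fin n → ZMod 2, A *ᵥ x = 0 → x = 0 ∨ x = vone := by
    intro x hx
    by_contra hcon
    push_neg at hcon
    obtain ⟨hx0, hx1⟩ := hcon
    have hZ2 : ∀ a : ZMod 2, a = 0 ∨ a = 1 := by decide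
    have li : LinearIndependent (ZMod 2) ![vone, x] := by
      rw [LinearIndependent.pair_iff]
      intro s t hst
      rcases hZ2 s with hs | hs <;> rcases hZ2 t with ht | ht <;> subst hs <;> subst ht
      · exact ⟨rfl, rfl⟩
      · exfalso; apply hx0; simpa using hst
      · exfalso
        have h1 : vone = 0 := by simpa using hst
        have := congrFun h1 ⟨0, hnpos⟩
        simp [hvone] at this
      · exfalso
        apply hx1
        have h1 : vone + x = 0 := by simpa using hst
        funext i
        have := congrFun h1 i
        have h2 : vone i + x i = 0 := this
        rcases hZ2 (x i) with h | h
        · exfalso; rw [h] at h2; simp [hvone] at h2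
        · rw [h]
    set p2 : Submodule (ZMod 2) (Fin n → ZMod 2) :=
      Submodule.span (ZMod 2) (Set.range ![vone, x]) with hp2
    have hrank : Module.finrank (ZMod 2) p2 = 2 := by
      rw [hp2, finrank_span_eq_card li]
      simp
    have hgen0 : ∀ z ∈ p2, f z = 0 := by
      intro z hz
      induction hz using Submodule.span_induction with
      | mem y hy =>
          obtain ⟨i, rfl⟩ := hy
          fin_cases i
          · show f vone = 0
            rw [hfapp]; exact hA1
          · show f x = 0
            rw [hfapp]; exact hx
      | zero => exact map_zero f
      | add a b _ _ ha hb => rw [map_add, ha, hb, add_zero]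
      | smul c a _ ha => rw [LinearMap.map_smul, ha, smul_zero]
    have hp2inv : ∀ z ∈ p2, f z ∈ p2 := by
      intro z hz; rw [hgen0 z hz]; exact p2.zero_mem
    obtain ⟨q2, hq2⟩ := Submodule.exists_isCompl p2
    have hmul2 : LinearMap.charpoly (f : Module.End (ZMod 2) (Fin n → ZMod 2)) =
        (LinearMap.restrict f hp2inv).charpoly *
        ((q2.projectionOnto p2 hq2.symm) ∘ₗ (f : Module.End (ZMod 2) (Fin n → ZMod 2))
          ∘ₗ q2.subtype).charpoly := charpoly_eq_mul _ p2 q2 hq2 hp2inv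
    have hres0 : LinearMap.restrict f hp2inv = (0 : Module.End (ZMod 2) p2) := by
      apply LinearMap.ext
      intro z
      apply Subtype.ext
      rw [LinearMap.restrict_apply]
      show f (z : Fin n → ZMod 2) = ((0 : Module.End (ZMod 2) p2) z : Fin n → ZMod 2)
      rw [hgen0 _ z.2]
      rfl
    have hchar2 : (LinearMap.restrict f hp2inv).charpoly = X ^ 2 := by
      rw [hres0, charpoly_zero_end, hrank]
    rw [hres0] at hmul2
    rw [charpoly_zero_end, hrank, hcharf, hfac] at hmul2
    -- X * φ₁^2 = X^2 * χ  ⟹  X ∣ φ₁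
    have hE : φ₁ ^ 2 = X * ((q2.projectionOnto p2 hq2.symm) ∘ₗ
        (f : Module.End (ZMod 2) (Fin n → ZMod 2)) ∘ₗ q2.subtype).charpoly := by
      apply mul_left_cancel₀ (Polynomial.X_ne_zero (R := ZMod 2))
      rw [hmul2]; ring
    have : (X : (ZMod 2)[X]) ∣ φ₁ ^ 2 := ⟨_, hE⟩
    exact hXφ ((Polynomial.prime_X (R := ZMod 2)).dvd_of_dvd_pow this)
  -- assemble
  set B := aeval A φ₁ with hB
  have hBA0 : B * A = 0 := by
    ext i j
    have h1 := hBA (Pi.single j 1)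
    rw [mulVec_mulVec] at h1
    have h2 := congrFun h1 i
    rw [mulVec_single] at h2
    simpa using h2
  have hBt : Bᵀ = B := htaev φ₁
  have hAB0 : A * B = 0 := by
    have h := congrArg Matrix.transpose hBA0
    rw [transpose_mul, hAsym, hBt, transpose_zero] at h
    exact h
  have hc0 : ∀ ψ : (ZMod 2)[X], (aeval A ψ) *ᵥ vone = (ψ.coeff 0) • vone := by
    intro ψ
    induction ψ using Polynomial.induction_on' with
    | add a b ha hb =>
        rw [map_add, add_mulVec, ha, hb, coeff_add, add_smul]
    | monomial k a =>
        rw [aeval_monomial, coeff_monomial]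
        cases k with
        | zero =>
            simp only [pow_zero, mul_one]
            rw [Algebra.algebraMap_eq_smul_one, smul_mulVec, one_mulVec]
            simp
        | succ m =>
            rw [← mulVec_mulVec, hpow1 m, mulVec_zero]
            simp
  have hB1 : B *ᵥ vone = vone := by
    rw [hB, hc0 φ₁]
    have h1 : φ₁.coeff 0 = 1 := by
      have : ∀ a : ZMod 2, a ≠ 0 → a = 1 := by decide
      exact this _ hcoprime
    rw [h1, one_smul]
  -- conclude B = all-ones
  show B = Matrix.of (fun _ _ => (1 : ZMod 2))
  ext i j
  have hcol : A *ᵥ (B *ᵥ Pi.single j 1) = 0 := by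
    rw [mulVec_mulVec, hAB0, zero_mulVec]
  rcases hker _ hcol with h | h
  · exfalso
    have hcolz : ∀ i', B i' j = 0 := by
      intro i'
      have := congrFun h i'
      rw [mulVec_single] at this
      simpa using this
    have hrow : (B *ᵥ vone) j = 1 := by rw [hB1]
    rw [mulVec] at hrow
    have hzero : B j ⬝ᵥ vone = 0 := by
      unfold dotProduct
      apply Finset.sum_eq_zero
      intro k _
      have hjk : B j k = B k j := by
        conv_lhs => rw [← hBt]
        rw [Matrix.transpose_apply]
      rw [hjk, hcolz k, zero_mul]
    rw [hzero] at hrow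
    exact one_ne_zero hrow.symm
  · have := congrFun h i
    rw [mulVec_single] at this
    simp only [Pi.smul_apply, Matrix.col_apply, MulOpposite.op_one, one_smul] at this
    rw [Matrix.of_apply]
    rw [this]
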